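/- Let g_i, g_j be lightlike with (g_i,g_j) ≠ 0, m ≠ 0, m ≠ m_{ij}, and suppose x_j = Γ(m)_{ji} x_i where Γ(m)_{ji} is the hyperbolic rotation with parameter as in the family of flat connections. If g^n_i, g^n_j are the rescalings of g_i, g_j satisfying (g^n_i, x_i) = (g^n_j, x_j) = -1, then x_i - x_j = (m/(m_{ij}(g^n_i, g^n_j)))(g^n_i - g^n_j); in particular x and g^n are edge-parallel. -/

import Mathlib

def mink (v w : Fin 4 → ℝ) : ℝ :=
  -(v 0 * w 0) + v 1 * w 1 + v 2 * w 2 + v 3 * w 3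

noncomputable def Gam (gi gj : Fin 4 → ℝ) (mij t : ℝ) (v : Fin 4 → ℝ) : Fin 4 → ℝ :=
  v + (t / (mij * mink gi gj)) •
    (((1 / (1 - t / mij)) * mink gi v) • gj - mink gj v • gi)

lemma mink_smul_left (c : ℝ) (v w : Fin 4 → ℝ) : mink (c • v) w = c * mink v w := by
  simp [mink]; ring

lemma mink_smul_right (c : ℝ) (v w : Fin 4 → ℝ) : mink v (c • w) = c * mink v w := by
  simp [mink]; ring

lemma mink_add_right (v w₁ w₂ : Fin 4 → ℝ) :
    mink v (w₁ + w₂) = mink v w₁ + mink v w₂ := by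
  simp [mink]; ring

lemma mink_sub_right (v w₁ w₂ : Fin 4 → ℝ) :
    mink v (w₁ - w₂) = mink v w₁ - mink v w₂ := by
  simp [mink]; ring

/-- A parallel section `x` of `Γ(m)` is edge-parallel to the normalized lift `gⁿ`:
`x_i - x_j = (m/(m_{ij}(gⁿ_i,gⁿ_j))) (gⁿ_i - gⁿ_j)`. -/
theorem parallel_section_edge_parallel
    (gi gj xi xj gni gnj : Fin 4 → ℝ) (m mij ci cj : ℝ)
    (hgi : mink gi gi = 0) (hgj : mink gj gj = 0) (hij : mink gi gj ≠ 0)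
    (hm : m ≠ 0) (hmij : mij ≠ 0) (hmm : m ≠ mij)
    (hx : xi = Gam gi gj mij m xj)
    (hgni : gni = ci • gi) (hgnj : gnj = cj • gj)
    (hni : mink gni xi = -1) (hnj : mink gnj xj = -1) :
    xi - xj = (m / (mij * mink gni gnj)) • (gni - gnj) := by
  set G := mink gi gj with hG
  set A := mink gi xj with hA
  set B := mink gj xj with hB
  have hms : mij - m ≠ 0 := sub_ne_zero.2 (Ne.symm hmm)
  have hs : (1 : ℝ) - m / mij ≠ 0 := by
    field_simp
    intro h; exact hms ((div_eq_zero_iff.mp h).resolve_right hmij)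
  have hgix : mink gi xi = A / (1 - m / mij) := by
    rw [hx]
    unfold Gam
    rw [mink_add_right, mink_smul_right, mink_sub_right, mink_smul_right, mink_smul_right]
    rw [← hG, ← hA, ← hB, hgi]
    field_simp [hms]
    ring
  have hciA : ci * A * mij = m - mij := by
    have h := hni
    rw [hgni, mink_smul_left, hgix] at h
    field_simp [hms] at h
    linear_combination h
  have hcjB : cj * B = -1 := by
    have h := hnj
    rw [hgnj, mink_smul_left, ← hB] at h
    linarith
  have hci : ci ≠ 0 := by
    intro h; rw [h, zero_mul, zero_mul] at hciA
    exact hms (by linarith)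
  have hcj : cj ≠ 0 := by
    intro h; rw [h, zero_mul] at hcjB; norm_num at hcjB
  have hgng : mink gni gnj = ci * cj * G := by
    rw [hgni, hgnj, mink_smul_left, mink_smul_right, ← hG]; ring
  rw [hgng, hgni, hgnj, hx]
  unfold Gam
  rw [← hG, ← hA, ← hB]
  funext k
  simp only [Pi.add_apply, Pi.sub_apply, Pi.smul_apply, smul_eq_mul]
  field_simp [hms]
  linear_combination (m * cj * gj k) * hciA + (m * (m - mij) * ci * gi k) * hcjB
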